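/- Let G be a connected graph whose complement has a connected component isomorphic to the complete graph K_n for some n ≥ 2. Then no vertex of that component is a basis forced vertex of G. -/

import Mathlib

open SimpleGraph

def IsResolving {V : Type*} (G : SimpleGraph V) (R : Set V) : Prop :=
  ∀ x y : V, x ≠ y → ∃ r ∈ R, G.dist r x ≠ G.dist r y

noncomputable def metricDim {V : Type*} (G : SimpleGraph V) : ℕ :=
  sInf {n | ∃ R : Set V, IsResolving G R ∧ R.ncard = n}

def IsMetricBasis {V : Type*} (G : SimpleGraph V) (R : Set V) : Prop :=
  IsResolving G R ∧ R.ncard = metricDim G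

def IsBasisForced {V : Type*} (G : SimpleGraph V) (v : V) : Prop :=
  ∀ R : Set V, IsMetricBasis G R → v ∈ R

theorem stmt11 {V : Type*} [Fintype V] (G : SimpleGraph V) (hG : G.Connected)
    (C : Gᶜ.ConnectedComponent) (n : ℕ) (hn : 2 ≤ n)
    (hiso : Nonempty ((Gᶜ.induce C.supp) ≃g (⊤ : SimpleGraph (Fin n)))) :
    ∀ v ∈ C.supp, ¬ IsBasisForced G v := by
  classical
  intro v hv hforced
  obtain ⟨φ⟩ := hiso
  set S := C.supp with hS
  -- S is a clique in Gᶜ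
  have hclq : ∀ x ∈ S, ∀ y ∈ S, x ≠ y → Gᶜ.Adj x y := by
    intro x hx y hy hxy
    have h := φ.map_rel_iff (a := ⟨x, hx⟩) (b := ⟨y, hy⟩)
    have : (⊤ : SimpleGraph (Fin n)).Adj (φ ⟨x, hx⟩) (φ ⟨y, hy⟩) := by
      simp only [top_adj]
      intro hEq
      exact hxy (congrArg Subtype.val (φ.toEquiv.injective hEq))
    exact h.mp this
  -- two distinct elements of S
  have h2 : ∃ a ∈ S, ∃ b ∈ S, a ≠ b := by
    refine ⟨(φ.symm ⟨0, by omega⟩ : {x // x ∈ S}).1, (φ.symm ⟨0, by omega⟩).2,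
      (φ.symm ⟨1, by omega⟩ : {x // x ∈ S}).1, (φ.symm ⟨1, by omega⟩).2, ?_⟩
    intro hEq
    have := φ.symm.toEquiv.injective (Subtype.ext hEq)
    simp only [Fin.mk.injEq] at this
    omega
  -- there is a vertex outside S
  have hz : ∃ z, z ∉ S := by
    by_contra hall
    push_neg at hall
    obtain ⟨a, ha, b, hb, hab⟩ := h2
    obtain ⟨w⟩ := hG.preconnected a b
    cases w with
    | nil => exact hab rfl
    | cons h p =>
      exact (hclq a ha _ (hall _) h.ne).2 h
  obtain ⟨z, hzS⟩ := hz
  -- cross adjacency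
  have hcross : ∀ x ∈ S, ∀ w, w ∉ S → G.Adj x w := by
    intro x hx w hw
    by_contra hadj
    have hne : x ≠ w := fun h => hw (h ▸ hx)
    have : Gᶜ.Adj x w := ⟨hne, hadj⟩
    have : w ∈ S := by
      rw [hS, ConnectedComponent.mem_supp_iff] at hx ⊢
      rw [← hx]
      exact (ConnectedComponent.sound this.symm.reachable)
    exact hw this
  -- distance 1 across
  have hd1 : ∀ x ∈ S, ∀ w, w ∉ S → G.dist x w = 1 :=
    fun x hx w hw => SimpleGraph.dist_eq_one_iff_adj.mpr (hcross x hx w hw)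
  -- distance 2 inside
  have hd2 : ∀ x ∈ S, ∀ y ∈ S, x ≠ y → G.dist x y = 2 := by
    intro x hx y hy hxy
    have hle : G.dist x y ≤ 2 := by
      have := SimpleGraph.dist_le
        (SimpleGraph.Walk.cons (hcross x hx z hzS) ((hcross y hy z hzS).symm.toWalk))
      simpa using this
    have h0 : 0 < G.dist x y := hG.pos_dist_of_ne hxy
    have h1 : G.dist x y ≠ 1 := by
      intro h
      exact (hclq x hx y hy hxy).2 (SimpleGraph.dist_eq_one_iff_adj.mp h)
    omega
  -- twin property
  have htwin : ∀ x ∈ S, ∀ y ∈ S, ∀ r, r ≠ x → r ≠ y → G.dist r x = G.dist r y := by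
    intro x hx y hy r hrx hry
    by_cases hxy : x = y
    · rw [hxy]
    · by_cases hr : r ∈ S
      · rw [hd2 r hr x hx hrx, hd2 r hr y hy hry]
      · rw [SimpleGraph.dist_comm, hd1 x hx r hr, SimpleGraph.dist_comm, hd1 y hy r hr]
  have hdne : ∀ a b : V, a ≠ b → G.dist a b ≠ 0 :=
    fun a b hab => Nat.pos_iff_ne_zero.mp (hG.pos_dist_of_ne hab)
  -- the metric dimension is attained
  have huniv : IsResolving G (Set.univ : Set V) := by
    intro x y hxy
    exact ⟨x, Set.mem_univ x, by rw [SimpleGraph.dist_self]; exact (hdne x y hxy).symm⟩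
  have hne : {m | ∃ R : Set V, IsResolving G R ∧ R.ncard = m}.Nonempty :=
    ⟨(Set.univ : Set V).ncard, Set.univ, huniv, rfl⟩
  obtain ⟨R, hRres, hRcard⟩ := Nat.sInf_mem hne
  have hvR : v ∈ R := hforced R ⟨hRres, hRcard⟩
  have hRfin : R.Finite := Set.toFinite R
  -- at most one vertex of S is outside R
  have hone : ∀ w1 ∈ S, ∀ w2 ∈ S, w1 ≠ w2 → w1 ∉ R → w2 ∉ R → False := by
    intro w1 h1 w2 h2 h12 hr1 hr2
    obtain ⟨r, hr, hrd⟩ := hRres w1 w2 h12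
    exact hrd (htwin w1 h1 w2 h2 r (fun h => hr1 (h ▸ hr)) (fun h => hr2 (h ▸ hr)))
  by_cases hall : ∀ w ∈ S, w ∈ R
  · -- all of S in R : R \ {v} is resolving, contradiction with minimality
    obtain ⟨a, ha, b, hb, hab⟩ := h2
    obtain ⟨u, hu, huv⟩ : ∃ u ∈ S, u ≠ v := by
      by_cases h : a = v
      · exact ⟨b, hb, fun hbv => hab (h.trans hbv.symm)⟩
      · exact ⟨a, ha, h⟩
    have hres : IsResolving G (R \ {v}) := by
      intro x y hxy
      by_cases hx : x ∈ R \ {v}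
      · exact ⟨x, hx, by rw [SimpleGraph.dist_self]; exact (hdne x y hxy).symm⟩
      by_cases hy : y ∈ R \ {v}
      · exact ⟨y, hy, by rw [SimpleGraph.dist_self]; exact hdne y x (Ne.symm hxy)⟩
      obtain ⟨r, hr, hrd⟩ := hRres x y hxy
      by_cases hrv : r = v
      · by_cases hxv : x = v
        · have hyS : y ∉ S := fun h => hy ⟨hall y h,
            fun hyv => hxy (hxv.trans (Set.mem_singleton_iff.mp hyv).symm)⟩
          refine ⟨u, ⟨hall u hu, huv⟩, ?_⟩
          rw [hxv, hd2 u hu v hv huv, hd1 u hu y hyS]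
          omega
        · by_cases hyv : y = v
          · have hxS : x ∉ S := fun h => hx ⟨hall x h, hxv⟩
            refine ⟨u, ⟨hall u hu, huv⟩, ?_⟩
            rw [hyv, hd2 u hu v hv huv, hd1 u hu x hxS]
            omega
          · have hxS : x ∉ S := fun h => hx ⟨hall x h, hxv⟩
            have hyS : y ∉ S := fun h => hy ⟨hall y h, hyv⟩
            exact absurd (by rw [hrv, hd1 v hv x hxS, hd1 v hv y hyS]) hrd
      · exact ⟨r, ⟨hr, hrv⟩, hrd⟩
    have hcard' : (R \ {v}).ncard = R.ncard - 1 := Set.ncard_diff_singleton_of_mem hvR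
    have hle : R.ncard ≤ (R \ {v}).ncard := by
      rw [hRcard]
      exact Nat.sInf_le ⟨R \ {v}, hres, rfl⟩
    have hpos : 0 < R.ncard := (Set.ncard_pos hRfin).mpr ⟨v, hvR⟩
    omega
  · -- some u ∈ S, u ∉ R : swap u and v
    push_neg at hall
    obtain ⟨u, hu, huR⟩ := hall
    have huv : u ≠ v := fun h => huR (h ▸ hvR)
    have hSR : ∀ w ∈ S, w ≠ u → w ∈ R := by
      intro w hw hwu
      by_contra hwR
      exact hone w hw u hu hwu hwR huR
    set R' := insert u (R \ {v}) with hR'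
    have hres : IsResolving G R' := by
      intro x y hxy
      by_cases hx : x ∈ R'
      · exact ⟨x, hx, by rw [SimpleGraph.dist_self]; exact (hdne x y hxy).symm⟩
      by_cases hy : y ∈ R'
      · exact ⟨y, hy, by rw [SimpleGraph.dist_self]; exact hdne y x (Ne.symm hxy)⟩
      have hxu : x ≠ u := fun h => hx (h ▸ Set.mem_insert u _)
      have hyu : y ≠ u := fun h => hy (h ▸ Set.mem_insert u _)
      have hSv : ∀ w, w ∈ S → w ∉ R' → w = v := by
        intro w hw hwR'
        by_contra hwv
        have hwu : w ≠ u := fun h => hwR' (h ▸ Set.mem_insert u _)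
        exact hwR' (Set.mem_insert_of_mem u ⟨hSR w hw hwu, hwv⟩)
      by_cases hxv : x = v
      · have hyS : y ∉ S := fun h => hxy (hxv.trans (hSv y h hy).symm)
        refine ⟨u, Set.mem_insert u _, ?_⟩
        rw [hxv, hd2 u hu v hv huv, hd1 u hu y hyS]
        omega
      · by_cases hyv : y = v
        · have hxS : x ∉ S := fun h => hxv (hSv x h hx)
          refine ⟨u, Set.mem_insert u _, ?_⟩
          rw [hyv, hd2 u hu v hv huv, hd1 u hu x hxS]
          omega
        · have hxS : x ∉ S := fun h => hxv (hSv x h hx)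
          have hyS : y ∉ S := fun h => hyv (hSv y h hy)
          obtain ⟨r, hr, hrd⟩ := hRres x y hxy
          by_cases hrv : r = v
          · exact absurd (by rw [hrv, hd1 v hv x hxS, hd1 v hv y hyS]) hrd
          · exact ⟨r, Set.mem_insert_of_mem u ⟨hr, hrv⟩, hrd⟩
    have hcard' : R'.ncard = R.ncard := by
      have h1 : u ∉ R \ {v} := fun h => huR h.1
      have h2 : (R \ {v}).ncard = R.ncard - 1 := Set.ncard_diff_singleton_of_mem hvR
      have h3 : R'.ncard = (R \ {v}).ncard + 1 :=
        Set.ncard_insert_of_notMem h1 hRfin.diff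
      have h4 : 0 < R.ncard := (Set.ncard_pos hRfin).mpr ⟨v, hvR⟩
      omega
    have hbasis : IsMetricBasis G R' := ⟨hres, hcard'.trans hRcard⟩
    have hvR' : v ∈ R' := hforced R' hbasis
    rcases Set.mem_insert_iff.mp hvR' with h | h
    · exact huv h.symm
    · exact h.2 rfl
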